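/- Let H be a Hopf algebra over k, A a bialgebra over k, and j : H → A, π : A → H bialgebra maps with π∘j = id_H. Let Π : A → A be defined by Π(a) = a₁ j(S(π(a₂))). Then Π∘Π = Π, π∘Π = η_H∘ε_A, and Im Π = {a ∈ A : a₁ ⊗ π(a₂) = a ⊗ 1} = A^{co π}. -/

import Mathlib

open TensorProduct Coalgebra

universe u

section ConvAux

variable {k : Type u} [CommSemiring k] {C B : Type*}
  [AddCommMonoid C] [Module k C] [Coalgebra k C] [Semiring B] [Algebra k B]

/-- The convolution product of two linear maps from a coalgebra to an algebra. -/
noncomputable def conv (f g : C →ₗ[k] B) : C →ₗ[k] B :=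
  LinearMap.mul' k B ∘ₗ TensorProduct.map f g ∘ₗ (Coalgebra.comul : C →ₗ[k] C ⊗[k] C)

lemma conv_repr (f g : C →ₗ[k] B) {a : C} {ι : Type*} (re : Coalgebra.Repr k a ι) :
    conv f g a = ∑ i ∈ re.index, f (re.left i) * g (re.right i) := by
  simp [conv, ← re.eq, map_sum]

lemma conv_assoc (f g h : C →ₗ[k] B) : conv (conv f g) h = conv f (conv g h) := by
  ext a
  set r := ℛ k a
  set a₁ : (i : C × C) → Coalgebra.Repr k (r.left i) (C × C) := fun i => ℛ k (r.left i) with ha₁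
  set a₂ : (i : C × C) → Coalgebra.Repr k (r.right i) (C × C) := fun i => ℛ k (r.right i) with ha₂
  have key := Coalgebra.sum_map_tmul_tmul_eq (R := k) f g h a (repr := r) (a₁ := a₁) (a₂ := a₂)
  have key2 := congrArg (LinearMap.mul' k B ∘ₗ (LinearMap.mul' k B).lTensor B) key
  simp only [map_sum, LinearMap.comp_apply, LinearMap.lTensor_tmul, LinearMap.mul'_apply] at key2
  rw [conv_repr (conv f g) h r, conv_repr f (conv g h) r]
  calc ∑ i ∈ r.index, conv f g (r.left i) * h (r.right i)
      = ∑ i ∈ r.index, ∑ j ∈ (a₁ i).index,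
          f ((a₁ i).left j) * (g ((a₁ i).right j) * h (r.right i)) := by
        refine Finset.sum_congr rfl fun i _ => ?_
        rw [conv_repr f g (a₁ i), Finset.sum_mul]
        simp [mul_assoc]
    _ = ∑ i ∈ r.index, ∑ j ∈ (a₂ i).index,
          f (r.left i) * (g ((a₂ i).left j) * h ((a₂ i).right j)) := key2.symm
    _ = ∑ i ∈ r.index, f (r.left i) * conv g h (r.right i) := by
        refine Finset.sum_congr rfl fun i _ => ?_
        rw [conv_repr g h (a₂ i), Finset.mul_sum]

lemma conv_unit_right (f : C →ₗ[k] B) :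
    conv f (Algebra.linearMap k B ∘ₗ (Coalgebra.counit : C →ₗ[k] k)) = f := by
  ext a
  rw [conv_repr _ _ (ℛ k a)]
  have key := Coalgebra.sum_map_tmul_counit_eq (R := k) f a (repr := ℛ k a)
  have key2 := congrArg (TensorProduct.rid k B) key
  simp only [map_sum, TensorProduct.rid_tmul, one_smul] at key2
  rw [← key2]
  refine Finset.sum_congr rfl fun i _ => ?_
  simp [Algebra.smul_def, Algebra.commutes]

lemma conv_unit_left (f : C →ₗ[k] B) :
    conv (Algebra.linearMap k B ∘ₗ (Coalgebra.counit : C →ₗ[k] k)) f = f := by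
  ext a
  rw [conv_repr _ _ (ℛ k a)]
  have key := Coalgebra.sum_counit_tmul_map_eq (R := k) f a (repr := ℛ k a)
  have key2 := congrArg (TensorProduct.lid k B) key
  simp only [map_sum, TensorProduct.lid_tmul, one_smul] at key2
  rw [← key2]
  refine Finset.sum_congr rfl fun i _ => ?_
  simp [Algebra.smul_def]

variable {B' : Type*} [Semiring B'] [Algebra k B']

lemma comp_conv (φ : B →ₐ[k] B') (f g : C →ₗ[k] B) :
    φ.toLinearMap ∘ₗ conv f g = conv (φ.toLinearMap ∘ₗ f) (φ.toLinearMap ∘ₗ g) := by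
  have hφ : φ.toLinearMap ∘ₗ LinearMap.mul' k B
      = LinearMap.mul' k B' ∘ₗ TensorProduct.map φ.toLinearMap φ.toLinearMap :=
    TensorProduct.ext' fun x y => by simp
  rw [conv, conv, ← LinearMap.comp_assoc _ _ φ.toLinearMap, ← LinearMap.comp_assoc, hφ,
    TensorProduct.map_comp, LinearMap.comp_assoc, LinearMap.comp_assoc]
  rfl

variable {C' : Type*} [AddCommMonoid C'] [Module k C'] [Coalgebra k C']

lemma conv_comp (p : C' →ₗ[k] C)
    (hp : (Coalgebra.comul : C →ₗ[k] C ⊗[k] C) ∘ₗ p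
        = TensorProduct.map p p ∘ₗ (Coalgebra.comul : C' →ₗ[k] C' ⊗[k] C'))
    (f g : C →ₗ[k] B) :
    conv f g ∘ₗ p = conv (f ∘ₗ p) (g ∘ₗ p) := by
  rw [conv, conv, LinearMap.comp_assoc, LinearMap.comp_assoc, hp, TensorProduct.map_comp,
    ← LinearMap.comp_assoc _ _ (TensorProduct.map f g), LinearMap.comp_assoc]

variable {A' H' : Type*} [Semiring A'] [Algebra k A'] [Semiring H'] [Algebra k H']

lemma conv_includeLR (f : C →ₗ[k] A') (g : C →ₗ[k] H') :
    conv ((Algebra.TensorProduct.includeLeft : A' →ₐ[k] A' ⊗[k] H').toLinearMap ∘ₗ f)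
      ((Algebra.TensorProduct.includeRight : H' →ₐ[k] A' ⊗[k] H').toLinearMap ∘ₗ g)
      = TensorProduct.map f g ∘ₗ (Coalgebra.comul : C →ₗ[k] C ⊗[k] C) := by
  rw [conv, ← LinearMap.comp_assoc, show LinearMap.mul' k (A' ⊗[k] H') ∘ₗ TensorProduct.map
      ((Algebra.TensorProduct.includeLeft : A' →ₐ[k] A' ⊗[k] H').toLinearMap ∘ₗ f)
      ((Algebra.TensorProduct.includeRight : H' →ₐ[k] A' ⊗[k] H').toLinearMap ∘ₗ g)
      = TensorProduct.map f g from
    TensorProduct.ext' fun x y => by simp [Algebra.TensorProduct.tmul_mul_tmul]]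

end ConvAux

/-- The projection `Π = id_A * (j ∘ S ∘ π)`, i.e. `Π(a) = a₁ j(S(π(a₂)))`. -/
noncomputable def PiMap {k H A : Type u} [Field k] [Ring H] [Ring A]
    [HopfAlgebra k H] [Bialgebra k A] (j : H →ₐc[k] A) (π : A →ₐc[k] H) : A →ₗ[k] A :=
  LinearMap.mul' k A
    ∘ₗ TensorProduct.map LinearMap.id
        ((j : H →ₗ[k] A) ∘ₗ HopfAlgebra.antipode (R := k) ∘ₗ (π : A →ₗ[k] H))
    ∘ₗ (Coalgebra.comul : A →ₗ[k] A ⊗[k] A)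

section Main

variable {k H A : Type u} [Field k] [Ring H] [Ring A]
    [HopfAlgebra k H] [Bialgebra k A]
    (j : H →ₐc[k] A) (π : A →ₐc[k] H)

lemma antipode_one' : HopfAlgebra.antipode (R := k) (1 : H) = 1 := by
  have h1 := HopfAlgebra.mul_antipode_rTensor_comul_apply (R := k) (A := H) 1
  simpa [Algebra.TensorProduct.one_def] using h1

lemma piMap_eq_conv :
    PiMap j π = conv LinearMap.id
      ((j : H →ₗ[k] A) ∘ₗ HopfAlgebra.antipode (R := k) ∘ₗ (π : A →ₗ[k] H)) := rfl

lemma pl_comp_jl (hπj : π.comp j = BialgHom.id k H) :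
    (π : A →ₗ[k] H) ∘ₗ (j : H →ₗ[k] A) = LinearMap.id := by
  ext x
  exact congr($hπj x)

/-- `E1`: coinvariant elements are fixed by `Π`. -/
lemma piMap_fixed {a : A}
    (h : TensorProduct.map LinearMap.id (π : A →ₗ[k] H) (Coalgebra.comul a) = a ⊗ₜ (1 : H)) :
    PiMap j π a = a := by
  have hdec : TensorProduct.map LinearMap.id ((j : H →ₗ[k] A) ∘ₗ HopfAlgebra.antipode (R := k))
        ∘ₗ TensorProduct.map LinearMap.id (π : A →ₗ[k] H)
      = TensorProduct.map (LinearMap.id : A →ₗ[k] A)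
          (((j : H →ₗ[k] A) ∘ₗ HopfAlgebra.antipode (R := k)) ∘ₗ (π : A →ₗ[k] H)) := by
    rw [← TensorProduct.map_comp, LinearMap.id_comp]
  calc PiMap j π a
      = LinearMap.mul' k A
          (TensorProduct.map (LinearMap.id : A →ₗ[k] A)
            (((j : H →ₗ[k] A) ∘ₗ HopfAlgebra.antipode (R := k)) ∘ₗ (π : A →ₗ[k] H))
            (Coalgebra.comul a)) := rfl
    _ = LinearMap.mul' k A
          (TensorProduct.map LinearMap.id ((j : H →ₗ[k] A) ∘ₗ HopfAlgebra.antipode (R := k))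
            (TensorProduct.map LinearMap.id (π : A →ₗ[k] H) (Coalgebra.comul a))) := by
          rw [← hdec]; rfl
    _ = a * j (HopfAlgebra.antipode (R := k) (1 : H)) := by rw [h]; simp
    _ = a := by rw [antipode_one']; simp

end Main

section E2

variable {k H A : Type u} [Field k] [Ring H] [Ring A]
    [HopfAlgebra k H] [Bialgebra k A]

/-- `t : A → A ⊗ H`, `a ↦ a ⊗ 1`. -/
noncomputable def tL : A →ₗ[k] A ⊗[k] H :=
  (Algebra.TensorProduct.includeLeft : A →ₐ[k] A ⊗[k] H).toLinearMap

/-- `ι : H → A ⊗ H`, `h ↦ 1 ⊗ h`. -/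
noncomputable def iL : H →ₗ[k] A ⊗[k] H :=
  (Algebra.TensorProduct.includeRight : H →ₐ[k] A ⊗[k] H).toLinearMap

variable (j : H →ₐc[k] A) (π : A →ₐc[k] H)

/-- `ψ = t ∘ j`. -/
noncomputable def psiL : H →ₗ[k] A ⊗[k] H := tL ∘ₗ (j : H →ₗ[k] A)

/-- `φ = (j ⊗ id) ∘ Δ_H`. -/
noncomputable def phiL : H →ₗ[k] A ⊗[k] H :=
  TensorProduct.map (j : H →ₗ[k] A) LinearMap.id ∘ₗ (Coalgebra.comul : H →ₗ[k] H ⊗[k] H)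

/-- `ρ = (id ⊗ π) ∘ Δ_A`. -/
noncomputable def rhoL : A →ₗ[k] A ⊗[k] H :=
  TensorProduct.map LinearMap.id (π : A →ₗ[k] H) ∘ₗ (Coalgebra.comul : A →ₗ[k] A ⊗[k] A)

/-- `w = ι ∘ π`. -/
noncomputable def wL : A →ₗ[k] A ⊗[k] H := iL ∘ₗ (π : A →ₗ[k] H)

/-- `S ∘ π`. -/
noncomputable def SpL : A →ₗ[k] H := HopfAlgebra.antipode (R := k) ∘ₗ (π : A →ₗ[k] H)

/-- `ρ` as an algebra homomorphism. -/
noncomputable def rhoA : A →ₐ[k] A ⊗[k] H :=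
  (Algebra.TensorProduct.map (AlgHom.id k A) (π : A →ₐ[k] H)).comp (Bialgebra.comulAlgHom k A)

/-- `ψ` as an algebra homomorphism. -/
noncomputable def psiA : H →ₐ[k] A ⊗[k] H :=
  (Algebra.TensorProduct.includeLeft : A →ₐ[k] A ⊗[k] H).comp (j : H →ₐ[k] A)

lemma psiA_toLinearMap : (psiA j : H →ₐ[k] A ⊗[k] H).toLinearMap = psiL j := rfl

lemma rhoA_toLinearMap : (rhoA π : A →ₐ[k] A ⊗[k] H).toLinearMap = rhoL π := by
  have hm : (Algebra.TensorProduct.map (AlgHom.id k A) (π : A →ₐ[k] H)).toLinearMap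
      = TensorProduct.map (LinearMap.id : A →ₗ[k] A) (π : A →ₗ[k] H) :=
    TensorProduct.ext' fun x y => by simp
  rw [rhoA, AlgHom.comp_toLinearMap, hm]
  rfl

lemma L1 : conv tL (wL π) = rhoL π := by
  rw [show (tL : A →ₗ[k] A ⊗[k] H) = tL ∘ₗ LinearMap.id from rfl, wL, iL, tL, conv_includeLR]
  rfl

lemma L2 : conv (psiL j) (iL : H →ₗ[k] A ⊗[k] H) = phiL j := by
  rw [show (iL : H →ₗ[k] A ⊗[k] H) = iL ∘ₗ LinearMap.id from rfl, psiL, iL, tL, conv_includeLR]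
  rfl

lemma L4 : (Coalgebra.comul : H →ₗ[k] H ⊗[k] H) ∘ₗ (π : A →ₗ[k] H)
    = TensorProduct.map (π : A →ₗ[k] H) (π : A →ₗ[k] H)
        ∘ₗ (Coalgebra.comul : A →ₗ[k] A ⊗[k] A) :=
  (CoalgHomClass.map_comp_comul π).symm

lemma L3 (hπj : π.comp j = BialgHom.id k H) :
    rhoL π ∘ₗ (j : H →ₗ[k] A) = phiL j := by
  have hjco : (Coalgebra.comul : A →ₗ[k] A ⊗[k] A) ∘ₗ (j : H →ₗ[k] A)
      = TensorProduct.map (j : H →ₗ[k] A) (j : H →ₗ[k] A)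
          ∘ₗ (Coalgebra.comul : H →ₗ[k] H ⊗[k] H) :=
    (CoalgHomClass.map_comp_comul j).symm
  rw [rhoL, phiL, LinearMap.comp_assoc, hjco,
    ← LinearMap.comp_assoc, ← TensorProduct.map_comp, LinearMap.id_comp, pl_comp_jl j π hπj]

lemma L5 : conv (HopfAlgebra.antipode (R := k) (A := H)) LinearMap.id
    = Algebra.linearMap k H ∘ₗ (Coalgebra.counit : H →ₗ[k] k) :=
  HopfAlgebra.mul_antipode_rTensor_comul

lemma L6 : conv LinearMap.id (HopfAlgebra.antipode (R := k) (A := H))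
    = Algebra.linearMap k H ∘ₗ (Coalgebra.counit : H →ₗ[k] k) :=
  HopfAlgebra.mul_antipode_lTensor_comul

lemma L7 (χ : H →ₐ[k] A ⊗[k] H) :
    χ.toLinearMap ∘ₗ Algebra.linearMap k H = Algebra.linearMap k (A ⊗[k] H) :=
  LinearMap.ext fun r => by simp

/-- `E2`: the image of `Π` consists of coinvariants. -/
lemma rho_comp_piMap (hπj : π.comp j = BialgHom.id k H) :
    rhoL π ∘ₗ PiMap j π = tL ∘ₗ PiMap j π := by
  have hπε : (Coalgebra.counit : H →ₗ[k] k) ∘ₗ (π : A →ₗ[k] H)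
      = (Coalgebra.counit : A →ₗ[k] k) := CoalgHomClass.counit_comp π
  -- step 1 : `t ∘ Π = conv t (ψ ∘ S ∘ π)`
  have s1 : (tL : A →ₗ[k] A ⊗[k] H) ∘ₗ PiMap j π = conv tL (psiL j ∘ₗ SpL π) := by
    rw [piMap_eq_conv, tL, comp_conv, LinearMap.comp_id]
    rfl
  -- step 2 : `ρ ∘ Π = conv ρ (φ ∘ S ∘ π)`
  have s2 : rhoL π ∘ₗ PiMap j π = conv (rhoL π) (phiL j ∘ₗ SpL π) := by
    rw [piMap_eq_conv, ← rhoA_toLinearMap, comp_conv, LinearMap.comp_id, rhoA_toLinearMap]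
    congr 1
    rw [show rhoL π ∘ₗ ((j : H →ₗ[k] A) ∘ₗ HopfAlgebra.antipode (R := k) ∘ₗ (π : A →ₗ[k] H))
        = (rhoL π ∘ₗ (j : H →ₗ[k] A)) ∘ₗ SpL π from rfl, L3 j π hπj]
  -- step 3 : `conv (ψ ∘ S ∘ π) (ψ ∘ π) = u`
  have s3 : conv (psiL j ∘ₗ SpL π) (psiL j ∘ₗ (π : A →ₗ[k] H))
      = Algebra.linearMap k (A ⊗[k] H) ∘ₗ (Coalgebra.counit : A →ₗ[k] k) := by
    rw [show psiL j ∘ₗ SpL π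
        = ((psiA j).toLinearMap ∘ₗ HopfAlgebra.antipode (R := k)) ∘ₗ (π : A →ₗ[k] H) from rfl,
      show psiL j ∘ₗ (π : A →ₗ[k] H)
        = ((psiA j).toLinearMap ∘ₗ LinearMap.id) ∘ₗ (π : A →ₗ[k] H) from rfl,
      ← conv_comp (π : A →ₗ[k] H) (L4 π), ← comp_conv, L5,
      show (psiA j).toLinearMap ∘ₗ (Algebra.linearMap k H ∘ₗ (Coalgebra.counit : H →ₗ[k] k))
        = ((psiA j).toLinearMap ∘ₗ Algebra.linearMap k H) ∘ₗ (Coalgebra.counit : H →ₗ[k] k)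
        from rfl,
      L7, LinearMap.comp_assoc, hπε]
  -- step 4 : `conv (φ ∘ π) (φ ∘ S ∘ π) = u`
  have hφA : ((rhoA π).comp (j : H →ₐ[k] A)).toLinearMap = phiL j := by
    rw [AlgHom.comp_toLinearMap, rhoA_toLinearMap]
    exact L3 j π hπj
  have s4 : conv (phiL j ∘ₗ (π : A →ₗ[k] H)) (phiL j ∘ₗ SpL π)
      = Algebra.linearMap k (A ⊗[k] H) ∘ₗ (Coalgebra.counit : A →ₗ[k] k) := by
    rw [show phiL j ∘ₗ SpL π
        = ((phiL (k := k) j) ∘ₗ HopfAlgebra.antipode (R := k)) ∘ₗ (π : A →ₗ[k] H) from rfl,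
      show phiL j ∘ₗ (π : A →ₗ[k] H)
        = ((phiL (k := k) j) ∘ₗ LinearMap.id) ∘ₗ (π : A →ₗ[k] H) from rfl,
      ← conv_comp (π : A →ₗ[k] H) (L4 π), ← hφA, ← comp_conv, L6,
      show ((rhoA π).comp (j : H →ₐ[k] A)).toLinearMap
          ∘ₗ (Algebra.linearMap k H ∘ₗ (Coalgebra.counit : H →ₗ[k] k))
        = (((rhoA π).comp (j : H →ₐ[k] A)).toLinearMap ∘ₗ Algebra.linearMap k H)
            ∘ₗ (Coalgebra.counit : H →ₗ[k] k) from rfl,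
      L7, LinearMap.comp_assoc, hπε]
  -- step 5 : `φ ∘ π = conv (ψ ∘ π) w`
  have s5 : phiL j ∘ₗ (π : A →ₗ[k] H)
      = conv (psiL j ∘ₗ (π : A →ₗ[k] H)) (wL π) := by
    rw [← L2, conv_comp (π : A →ₗ[k] H) (L4 π)]
    rfl
  -- step 6 : `conv (conv t (ψSπ)) (ψπ) = t`
  have s6 : conv (conv tL (psiL j ∘ₗ SpL π)) (psiL j ∘ₗ (π : A →ₗ[k] H))
      = (tL : A →ₗ[k] A ⊗[k] H) := by
    rw [conv_assoc, s3, conv_unit_right]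
  -- step 7 : `conv (conv t (ψSπ)) (φπ) = ρ`
  have s7 : conv (conv tL (psiL j ∘ₗ SpL π)) (phiL j ∘ₗ (π : A →ₗ[k] H)) = rhoL π := by
    rw [s5, ← conv_assoc, s6, L1]
  -- step 8 : conclude
  have s8 : conv (rhoL π) (phiL j ∘ₗ SpL π) = conv tL (psiL j ∘ₗ SpL π) := by
    rw [← s7, conv_assoc, s4, conv_unit_right]
  rw [s1, s2, s8]

end E2

section Final

variable {k H A : Type u} [Field k] [Ring H] [Ring A]
    [HopfAlgebra k H] [Bialgebra k A]
    (j : H →ₐc[k] A) (π : A →ₐc[k] H)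

lemma pi_comp_piMap (hπj : π.comp j = BialgHom.id k H) :
    (π : A →ₗ[k] H) ∘ₗ PiMap j π
      = Algebra.linearMap k H ∘ₗ (Coalgebra.counit : A →ₗ[k] k) := by
  have hπε : (Coalgebra.counit : H →ₗ[k] k) ∘ₗ (π : A →ₗ[k] H)
      = (Coalgebra.counit : A →ₗ[k] k) := CoalgHomClass.counit_comp π
  rw [piMap_eq_conv]
  have step : (π : A →ₗ[k] H)
        ∘ₗ conv LinearMap.id
            ((j : H →ₗ[k] A) ∘ₗ HopfAlgebra.antipode (R := k) ∘ₗ (π : A →ₗ[k] H))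
      = conv ((π : A →ₐ[k] H).toLinearMap ∘ₗ LinearMap.id)
          ((π : A →ₐ[k] H).toLinearMap
            ∘ₗ ((j : H →ₗ[k] A) ∘ₗ HopfAlgebra.antipode (R := k) ∘ₗ (π : A →ₗ[k] H))) :=
    by exact comp_conv (π : A →ₐ[k] H) _ _
  rw [step]
  have h2 : (π : A →ₐ[k] H).toLinearMap
        ∘ₗ ((j : H →ₗ[k] A) ∘ₗ HopfAlgebra.antipode (R := k) ∘ₗ (π : A →ₗ[k] H))
      = HopfAlgebra.antipode (R := k) ∘ₗ (π : A →ₗ[k] H) := by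
    have h2' : ((π : A →ₗ[k] H) ∘ₗ (j : H →ₗ[k] A))
          ∘ₗ (HopfAlgebra.antipode (R := k) ∘ₗ (π : A →ₗ[k] H))
        = HopfAlgebra.antipode (R := k) ∘ₗ (π : A →ₗ[k] H) := by
      rw [pl_comp_jl j π hπj, LinearMap.id_comp]
    exact h2'
  rw [h2]
  have h3 : conv ((π : A →ₐ[k] H).toLinearMap ∘ₗ LinearMap.id)
        (HopfAlgebra.antipode (R := k) ∘ₗ (π : A →ₗ[k] H))
      = conv (LinearMap.id ∘ₗ (π : A →ₗ[k] H))
        (HopfAlgebra.antipode (R := k) ∘ₗ (π : A →ₗ[k] H)) := rfl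
  rw [h3, ← conv_comp (π : A →ₗ[k] H) (L4 π), L6, LinearMap.comp_assoc, hπε]

/- STATEMENT 11: Let `H` be a Hopf algebra, `A` a bialgebra, and `j : H → A`, `π : A → H`
bialgebra maps with `π ∘ j = id_H`.  With `Π(a) = a₁ j(S(π(a₂)))` one has `Π ∘ Π = Π`,
`π ∘ Π = η_H ∘ ε_A`, and `Im Π = {a ∈ A : a₁ ⊗ π(a₂) = a ⊗ 1} = A^{co π}`. -/
theorem stmt_11 {k H A : Type u} [Field k] [Ring H] [Ring A]
    [HopfAlgebra k H] [Bialgebra k A]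
    (j : H →ₐc[k] A) (π : A →ₐc[k] H)
    (hπj : π.comp j = BialgHom.id k H) :
    (PiMap j π ∘ₗ PiMap j π = PiMap j π) ∧
    ((π : A →ₗ[k] H) ∘ₗ PiMap j π
      = Algebra.linearMap k H ∘ₗ (Coalgebra.counit : A →ₗ[k] k)) ∧
    (∀ a : A, a ∈ LinearMap.range (PiMap j π) ↔
      TensorProduct.map LinearMap.id (π : A →ₗ[k] H) (Coalgebra.comul a)
        = a ⊗ₜ (1 : H)) := by
  have E2' : ∀ b : A,
      TensorProduct.map LinearMap.id (π : A →ₗ[k] H) (Coalgebra.comul (PiMap j π b))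
        = PiMap j π b ⊗ₜ (1 : H) := by
    intro b
    have h := LinearMap.congr_fun (rho_comp_piMap j π hπj) b
    simpa [rhoL, tL] using h
  refine ⟨?_, pi_comp_piMap j π hπj, fun a => ?_⟩
  · ext a
    exact piMap_fixed j π (E2' a)
  · constructor
    · rintro ⟨b, rfl⟩
      exact E2' b
    · intro h
      exact ⟨a, piMap_fixed j π h⟩

end Final
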